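/- For every reduced n-expression u, one has dist(u, NF(u)) ≤ n(n-1)·length(u)/2, where NF(u) is the unique normal expression equivalent to u. -/

import Mathlib

open scoped Classical

noncomputable section

/-- adjacent transposition `s i = (i, i+1)` acting on ℕ (1-indexed positions) -/
def s (i : ℕ) : Equiv.Perm ℕ := Equiv.swap i (i + 1)

/-- permutation represented by a word; letters are applied left to right
(`wperm (u ++ v) = wperm v * wperm u`, i.e. `u` first, then `v`). -/
def wperm (w : List ℕ) : Equiv.Perm ℕ := ((w.map s).reverse).prod

/-- `w` is an `n`-expression: a word in the letters `s 1, ..., s (n-1)` -/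
def IsExpr (n : ℕ) (w : List ℕ) : Prop := ∀ i ∈ w, 1 ≤ i ∧ i + 1 ≤ n

/-- set of inversions of a permutation of `{1,...,n}` -/
def invSet (n : ℕ) (π : Equiv.Perm ℕ) : Finset (ℕ × ℕ) :=
  (Finset.Icc 1 n ×ˢ Finset.Icc 1 n).filter (fun pq => pq.1 < pq.2 ∧ π pq.2 < π pq.1)

/-- a reduced `n`-expression: its length equals the inversion number of the
permutation it represents -/
def ReducedExpr (n : ℕ) (w : List ℕ) : Prop :=
  IsExpr n w ∧ w.length = (invSet n (wperm w)).card

/-- one application of a braid relation `s i s j s i = s j s i s j`, `|i-j| = 1` -/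
inductive StepI : List ℕ → List ℕ → Prop
  | mk (a b : List ℕ) (i j : ℕ) (h : i + 1 = j ∨ j + 1 = i) :
      StepI (a ++ i :: j :: i :: b) (a ++ j :: i :: j :: b)

/-- one application of a commutation relation `s i s j = s j s i`, `|i-j| ≥ 2` -/
inductive StepII : List ℕ → List ℕ → Prop
  | mk (a b : List ℕ) (i j : ℕ) (h : i + 2 ≤ j ∨ j + 2 ≤ i) :
      StepII (a ++ i :: j :: b) (a ++ j :: i :: b)

def BraidStep (u v : List ℕ) : Prop := StepI u v ∨ StepII u v

/-- `c` is a derivation from `u` to `v` by braid relations -/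
def IsDeriv (u v : List ℕ) (c : List (List ℕ)) : Prop :=
  c.Chain' BraidStep ∧ c.head? = some u ∧ c.getLast? = some v

/-- combinatorial distance: minimal number of braid relations transforming `u` into `v` -/
def dist (u v : List ℕ) : ℕ :=
  sInf {k | ∃ c, IsDeriv u v c ∧ c.length = k + 1}

/-- the word `s_{j,i} = s_{j-1} s_{j-2} ... s_i` (empty if `j ≤ i`) -/
def sji (j i : ℕ) : List ℕ := (List.range (j - i)).map (fun k => j - 1 - k)

/-- the normal word `s_{1,f(1)} s_{2,f(2)} ... s_{n,f(n)}` -/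
def normalWord (n : ℕ) (f : ℕ → ℕ) : List ℕ :=
  ((List.range n).map (fun k => sji (k + 1) (f (k + 1)))).flatten

/-- `f : {1,...,n} → {1,...,n}` with `1 ≤ f i ≤ i` for all `i` -/
def IsNormalFun (n : ℕ) (f : ℕ → ℕ) : Prop := ∀ i ∈ Finset.Icc 1 n, 1 ≤ f i ∧ f i ≤ i

/-- names of the successive crossings: the name of a letter is the pair of starting
positions of the two strands crossing there -/
def namesAux : Equiv.Perm ℕ → List ℕ → List (Finset ℕ)
  | _, [] => []
  | π, i :: rest => ({π⁻¹ i, π⁻¹ (i + 1)} : Finset ℕ) :: namesAux (s i * π) rest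

/-- the name sequence `S(w)` of a word -/
def names (w : List ℕ) : List (Finset ℕ) := namesAux 1 w

/-- two entries occur in the same relative order in `S` and `S'` -/
def sameOrder (S S' : List (Finset ℕ)) (a b : Finset ℕ) : Prop :=
  (S.idxOf a < S.idxOf b) ↔ (S'.idxOf a < S'.idxOf b)

/-- `I₃(S,S')`: number of triples `{p,q,r} ⊆ {1,...,n}` such that the relative order of
the three pairs `{p,q}, {p,r}, {q,r}` is not the same in `S` and `S'` -/
def I3 (n : ℕ) (S S' : List (Finset ℕ)) : ℕ :=
  (((Finset.Icc 1 n).powersetCard 3).filter (fun t =>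
    ¬ ∀ a ∈ t.powersetCard 2, ∀ b ∈ t.powersetCard 2, sameOrder S S' a b)).card

/-- `I₂,₂(S,S')`: number of unordered pairs of disjoint pairs in `{1,...,n}` whose
relative order is not the same in `S` and `S'` -/
def I22 (n : ℕ) (S S' : List (Finset ℕ)) : ℕ :=
  ((((Finset.Icc 1 n).powersetCard 2).powersetCard 2).filter (fun P =>
    (∀ a ∈ P, ∀ b ∈ P, a ≠ b → Disjoint a b) ∧
    ¬ ∀ a ∈ P, ∀ b ∈ P, sameOrder S S' a b)).card

/-- total number of unordered pairs of entries whose relative order differs -/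
def InvCount (S S' : List (Finset ℕ)) : ℕ :=
  ((S.toFinset.powersetCard 2).filter (fun P =>
    ¬ ∀ a ∈ P, ∀ b ∈ P, sameOrder S S' a b)).card

/-- number of type I steps in a derivation -/
def countStepsI (c : List (List ℕ)) : ℕ :=
  ((Finset.range (c.length - 1)).filter (fun k => StepI (c.getD k []) (c.getD (k + 1) []))).card

/-- number of type II steps in a derivation -/
def countStepsII (c : List (List ℕ)) : ℕ :=
  ((Finset.range (c.length - 1)).filter (fun k => StepII (c.getD k []) (c.getD (k + 1) []))).card

/-- position of the strand starting at position `p` after the first `k` letters of `w` -/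
def strandPos (w : List ℕ) (p k : ℕ) : ℕ := wperm (w.take k) p

/-- number of unit squares to the right of the `n`-th strand in the braid diagram of `w`,
drawn on an `(n-1) × length w` grid -/
def area (n : ℕ) (w : List ℕ) : ℕ :=
  ((List.range w.length).map (fun k => n - max (strandPos w n k) (strandPos w n (k + 1)))).sum

/-- `u_n = s_{1,1} s_{2,1} ... s_{n,1}` -/
def uWord (n : ℕ) : List ℕ := ((List.range n).map (fun k => sji (k + 1) 1)).flatten

/-- `v_n = s_{n,1} s_{n,2} ... s_{n,n-1}` -/
def vWord (n : ℕ) : List ℕ := ((List.range (n - 1)).map (fun k => sji n (k + 1))).flatten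

-- basic wperm lemmas
lemma wperm_nil : wperm [] = 1 := rfl

lemma wperm_append (a b : List ℕ) : wperm (a ++ b) = wperm b * wperm a := by
  simp [wperm, List.reverse_append, List.prod_append]

lemma wperm_cons (i : ℕ) (w : List ℕ) : wperm (i :: w) = wperm w * s i := by
  simp [wperm, List.prod_concat]

lemma wperm_singleton (i : ℕ) : wperm [i] = s i := by
  simp [wperm]

lemma wperm_concat (w : List ℕ) (i : ℕ) : wperm (w ++ [i]) = s i * wperm w := by
  simp [wperm_append, wperm_singleton]

lemma s_mul_self (i : ℕ) : s i * s i = 1 := Equiv.swap_mul_self _ _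

lemma s_apply (i x : ℕ) : s i x = if x = i then i + 1 else if x = i + 1 then i else x := by
  simp [s, Equiv.swap_apply_def]

lemma s_braid (i : ℕ) : s i * s (i+1) * s i = s (i+1) * s i * s (i+1) := by
  have h1 : s i * s (i+1) * s i = Equiv.swap (s i (i+1)) (s i (i+1+1)) := by
    rw [Equiv.swap_apply_apply]; simp [s, mul_assoc]
  have h2 : s (i+1) * s i * s (i+1) = Equiv.swap (s (i+1) i) (s (i+1) (i+1)) := by
    rw [Equiv.swap_apply_apply]; simp [s, mul_assoc]
  have e1 : (s i) (i+1) = i := Equiv.swap_apply_right _ _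
  have e2 : (s i) (i+1+1) = i+1+1 := Equiv.swap_apply_of_ne_of_ne (by omega) (by omega)
  have e3 : (s (i+1)) i = i := Equiv.swap_apply_of_ne_of_ne (by omega) (by omega)
  have e4 : (s (i+1)) (i+1) = i+1+1 := Equiv.swap_apply_left _ _
  rw [h1, h2, e1, e2, e3, e4]

lemma s_comm (i j : ℕ) (h : i + 2 ≤ j ∨ j + 2 ≤ i) : s i * s j = s j * s i := by
  ext x
  simp only [Equiv.Perm.mul_apply, s_apply]
  split_ifs <;> omega

lemma braidStep_wperm {u v : List ℕ} (h : BraidStep u v) : wperm u = wperm v := by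
  rcases h with (⟨a, b, i, j, hij⟩ | ⟨a, b, i, j, hij⟩)
  · have : wperm [i, j, i] = wperm [j, i, j] := by
      simp only [show ([i,j,i] : List ℕ) = [i] ++ [j] ++ [i] by rfl,
        show ([j,i,j] : List ℕ) = [j] ++ [i] ++ [j] by rfl, wperm_append, wperm_singleton]
      rcases hij with h | h
      · subst h; rw [← mul_assoc, ← mul_assoc]; exact s_braid i
      · subst h; rw [← mul_assoc, ← mul_assoc]; exact (s_braid j).symm
    rw [show a ++ i :: j :: i :: b = a ++ ([i,j,i] ++ b) from rfl,
      show a ++ j :: i :: j :: b = a ++ ([j,i,j] ++ b) from rfl,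
      wperm_append, wperm_append, wperm_append, wperm_append, this]
  · have : wperm [i, j] = wperm [j, i] := by
      simp only [show ([i,j] : List ℕ) = [i] ++ [j] by rfl,
        show ([j,i] : List ℕ) = [j] ++ [i] by rfl, wperm_append, wperm_singleton]
      exact (s_comm i j hij).symm
    rw [show a ++ i :: j :: b = a ++ ([i,j] ++ b) from rfl,
      show a ++ j :: i :: b = a ++ ([j,i] ++ b) from rfl,
      wperm_append, wperm_append, wperm_append, wperm_append, this]

lemma braidStep_length {u v : List ℕ} (h : BraidStep u v) : u.length = v.length := by
  rcases h with (⟨a, b, i, j, _⟩ | ⟨a, b, i, j, _⟩) <;> simp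

lemma braidStep_append {u v : List ℕ} (a b : List ℕ) (h : BraidStep u v) :
    BraidStep (a ++ u ++ b) (a ++ v ++ b) := by
  rcases h with (⟨c, d, i, j, hij⟩ | ⟨c, d, i, j, hij⟩)
  · left
    have h1 : a ++ (c ++ i :: j :: i :: d) ++ b = (a ++ c) ++ i :: j :: i :: (d ++ b) := by simp
    have h2 : a ++ (c ++ j :: i :: j :: d) ++ b = (a ++ c) ++ j :: i :: j :: (d ++ b) := by simp
    rw [h1, h2]; exact StepI.mk _ _ _ _ hij
  · right
    have h1 : a ++ (c ++ i :: j :: d) ++ b = (a ++ c) ++ i :: j :: (d ++ b) := by simp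
    have h2 : a ++ (c ++ j :: i :: d) ++ b = (a ++ c) ++ j :: i :: (d ++ b) := by simp
    rw [h1, h2]; exact StepII.mk _ _ _ _ hij

lemma braidStep_mem {u v : List ℕ} (h : BraidStep u v) {m : ℕ} (hm : m ∈ v) : m ∈ u := by
  rcases h with (⟨a, b, i, j, _⟩ | ⟨a, b, i, j, _⟩) <;> simp at hm ⊢ <;> tauto
/-- auxiliary: reachability in exactly `k` braid steps -/
inductive Reach : ℕ → List ℕ → List ℕ → Prop
  | refl (u : List ℕ) : Reach 0 u u
  | head {u v w : List ℕ} {k : ℕ} : BraidStep u v → Reach k v w → Reach (k + 1) u w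

lemma Reach.single {u v : List ℕ} (h : BraidStep u v) : Reach 1 u v :=
  Reach.head h (Reach.refl v)

lemma Reach.trans {k m : ℕ} {u v w : List ℕ} (h1 : Reach k u v) (h2 : Reach m v w) :
    Reach (k + m) u w := by
  induction h1 with
  | refl => simpa using h2
  | head hs _ ih => rw [Nat.add_right_comm]; exact Reach.head hs (ih h2)

lemma Reach.wperm_eq {k : ℕ} {u v : List ℕ} (h : Reach k u v) : wperm u = wperm v := by
  induction h with
  | refl => rfl
  | head hs _ ih => rw [braidStep_wperm hs, ih]

lemma Reach.length_eq {k : ℕ} {u v : List ℕ} (h : Reach k u v) : u.length = v.length := by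
  induction h with
  | refl => rfl
  | head hs _ ih => rw [braidStep_length hs, ih]

lemma Reach.append {k : ℕ} {u v : List ℕ} (a b : List ℕ) (h : Reach k u v) :
    Reach k (a ++ u ++ b) (a ++ v ++ b) := by
  induction h with
  | refl => exact Reach.refl _
  | head hs _ ih => exact Reach.head (braidStep_append a b hs) ih

lemma Reach.append_right {k : ℕ} {u v : List ℕ} (b : List ℕ) (h : Reach k u v) :
    Reach k (u ++ b) (v ++ b) := by
  have := Reach.append [] b h; simpa using this

lemma Reach.append_left {k : ℕ} {u v : List ℕ} (a : List ℕ) (h : Reach k u v) :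
    Reach k (a ++ u) (a ++ v) := by
  have := Reach.append a [] h; simpa using this

lemma Reach.mem {k : ℕ} {u v : List ℕ} (h : Reach k u v) {m : ℕ} (hm : m ∈ v) : m ∈ u := by
  induction h with
  | refl => exact hm
  | head hs _ ih => exact braidStep_mem hs (ih hm)

lemma reach_deriv {k : ℕ} {u v : List ℕ} (h : Reach k u v) :
    ∃ c, IsDeriv u v c ∧ c.length = k + 1 := by
  induction h with
  | refl u => exact ⟨[u], ⟨List.isChain_singleton u, rfl, rfl⟩, rfl⟩
  | @head u v w k hs _ ih =>
    obtain ⟨c, ⟨hch, hhd, hlast⟩, hlen⟩ := ih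
    refine ⟨u :: c, ⟨?_, rfl, ?_⟩, by simp [hlen]⟩
    · exact List.IsChain.cons hch (fun y hy => by rw [hhd] at hy; cases hy; exact hs)
    · rcases c with _ | ⟨x, c'⟩
      · simp at hlen
      · rw [List.getLast?_cons_cons]; exact hlast

lemma dist_le_of_reach {k : ℕ} {u v : List ℕ} (h : Reach k u v) : dist u v ≤ k := by
  obtain ⟨c, hd, hl⟩ := reach_deriv h
  exact Nat.sInf_le ⟨c, hd, hl⟩

/-- a letter commutes through a word of far letters -/
lemma reach_comm_through {i : ℕ} : ∀ (w : List ℕ), (∀ m ∈ w, m + 2 ≤ i ∨ i + 2 ≤ m) →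
    Reach w.length (w ++ [i]) ([i] ++ w)
  | [], _ => Reach.refl _
  | m :: w, h => by
    have h1 : BraidStep ([] ++ m :: i :: w) ([] ++ i :: m :: w) :=
      Or.inr (StepII.mk [] w m i (by rcases h m (by simp) with h' | h' <;> omega))
    have h2 : Reach w.length (m :: (w ++ [i])) (m :: (i :: w)) := by
      have := (reach_comm_through w (fun x hx => h x (by simp [hx]))).append_left [m]
      simpa using this
    have h3 : Reach (w.length + 1) (m :: (w ++ [i])) (i :: m :: w) :=
      h2.trans (by simpa using Reach.single h1)
    simpa using h3
lemma sji_of_le {k j : ℕ} (h : k ≤ j) : sji k j = [] := by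
  simp [sji, Nat.sub_eq_zero_of_le h]

lemma sji_cons {k j : ℕ} (h : j < k) : sji k j = (k - 1) :: sji (k - 1) j := by
  have hk : k - j = (k - 1 - j) + 1 := by omega
  simp only [sji, hk, List.range_succ_eq_map]
  simp only [List.map_cons, Nat.sub_zero, List.map_map]
  congr 1
  apply List.map_congr_left
  intro a ha
  simp only [Function.comp_apply]
  simp at ha
  omega

lemma sji_concat {k j : ℕ} (h1 : 1 ≤ j) (h2 : j ≤ k) : sji k j ++ [j - 1] = sji k (j - 1) := by
  induction k with
  | zero => omega
  | succ k ih =>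
    rcases Nat.lt_or_ge j (k + 1) with h | h
    · rw [sji_cons h, sji_cons (show j - 1 < k + 1 by omega)]
      simp only [Nat.add_sub_cancel, List.cons_append]
      rw [ih (by omega)]
    · have hj : j = k + 1 := by omega
      subst hj
      simp [sji_of_le (le_refl (k+1)), sji_cons (Nat.lt_succ_self k),
        sji_of_le (le_refl k)]

lemma mem_sji {k j m : ℕ} (h : m ∈ sji k j) : j ≤ m ∧ m + 1 ≤ k := by
  simp only [sji, List.mem_map, List.mem_range] at h
  obtain ⟨t, ht, rfl⟩ := h
  omega

lemma sji_length (k j : ℕ) : (sji k j).length = k - j := by simp [sji]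

/-- splitting: `sji k j = sji k i ++ sji i j` for `j ≤ i ≤ k` -/
lemma sji_split {k i j : ℕ} (h1 : j ≤ i) (h2 : i ≤ k) : sji k j = sji k i ++ sji i j := by
  induction k with
  | zero =>
    have : i = 0 := by omega
    subst this
    simp [sji_of_le]
  | succ k ih =>
    rcases Nat.lt_or_ge i (k + 1) with h | h
    · rw [sji_cons (show j < k + 1 by omega), sji_cons h]
      simp only [Nat.add_sub_cancel]
      rw [ih (by omega)]
      simp
    · have : i = k + 1 := by omega
      subst this
      rw [sji_of_le le_rfl]
      simp

/-- the evaluation `wperm (sji k j) k = j` for `j ≤ k` -/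
lemma wperm_sji_apply {k j : ℕ} (h : j ≤ k) : wperm (sji k j) k = j := by
  induction k with
  | zero =>
    have hj : j = 0 := Nat.le_zero.mp h
    subst hj
    rfl
  | succ k ih =>
    rcases Nat.lt_or_ge j (k + 1) with hlt | hge
    · rw [sji_cons hlt]
      simp only [Nat.add_sub_cancel]
      rw [wperm_cons]
      have : (s k) (k + 1) = k := Equiv.swap_apply_right _ _
      rw [Equiv.Perm.mul_apply, this]
      exact ih (by omega)
    · have : j = k + 1 := by omega
      subst this
      rw [sji_of_le le_rfl]; rfl

lemma wperm_fixed {x : ℕ} : ∀ {w : List ℕ}, (∀ m ∈ w, m + 2 ≤ x) → wperm w x = x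
  | [], _ => rfl
  | m :: w, h => by
    rw [wperm_cons, Equiv.Perm.mul_apply]
    have h1 : (s m) x = x :=
      Equiv.swap_apply_of_ne_of_ne (by have := h m (by simp); omega) (by have := h m (by simp); omega)
    rw [h1]
    exact wperm_fixed (fun y hy => h y (by simp [hy]))

/-- reflection: `s_{k,j} s_i` rewrites to `s_{i-1} s_{k,j}` for `j < i < k` -/
lemma reach_reflect {k j i : ℕ} (h1 : j + 1 ≤ i) (h2 : i + 1 ≤ k) :
    Reach (k - j - 1) (sji k j ++ [i]) ([i - 1] ++ sji k j) := by
  -- sji k j = sji k (i+1) ++ [i] ++ [i-1] ++ sji (i-1) j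
  have e1 : sji k j = sji k (i + 1) ++ sji (i + 1) j := sji_split (by omega) (by omega)
  have e2 : sji (i + 1) j = i :: sji i j := by
    rw [sji_cons (show j < i + 1 by omega)]; simp
  have e3 : sji i j = (i - 1) :: sji (i - 1) j := sji_cons (by omega)
  set A := sji k (i + 1) with hA
  set B := sji (i - 1) j with hB
  have ew : sji k j = A ++ i :: (i-1) :: B := by rw [e1, e2, e3]
  -- step 1: commute [i] through B, cost B.length = i - 1 - j
  have hBmem : ∀ m ∈ B, m + 2 ≤ i ∨ i + 2 ≤ m := by
    intro m hm; have := mem_sji hm; omega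
  have r1 : Reach B.length (B ++ [i]) ([i] ++ B) := reach_comm_through B hBmem
  have s1 : Reach B.length (sji k j ++ [i]) (A ++ i :: (i-1) :: i :: B) := by
    have := (reach_comm_through B hBmem).append_left (A ++ [i, i-1])
    rw [ew]
    simpa using this
  have r2 : Reach 1 (A ++ i :: (i-1) :: i :: B) (A ++ (i-1) :: i :: (i-1) :: B) :=
    Reach.single (Or.inl (StepI.mk A B i (i-1) (Or.inr (by omega))))
  have hAmem : ∀ m ∈ A, m + 2 ≤ (i-1) ∨ (i-1) + 2 ≤ m := by
    intro m hm; have := mem_sji hm; omega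
  have s3 : Reach A.length (A ++ (i-1) :: i :: (i-1) :: B) ([i - 1] ++ sji k j) := by
    have := (reach_comm_through (i := i - 1) A hAmem).append_right (i :: (i-1) :: B)
    rw [ew]
    simpa using this
  have rr : Reach (B.length + 1 + A.length) (sji k j ++ [i]) ([i - 1] ++ sji k j) :=
    (s1.trans r2).trans s3
  have hcost : B.length + 1 + A.length = k - j - 1 := by
    rw [hA, hB, sji_length, sji_length]; omega
  rwa [hcost] at rr
lemma invSet_one (n : ℕ) : invSet n 1 = ∅ := by
  ext pq
  simp only [invSet, Finset.mem_filter, Finset.notMem_empty, iff_false, not_and]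
  intro _ h
  simp only [Equiv.Perm.one_apply]
  omega

lemma invSet_mul_s_card_le (n : ℕ) (π : Equiv.Perm ℕ) (i : ℕ) :
    (invSet n (s i * π)).card ≤ (invSet n π).card + 1 := by
  classical
  set E : Finset (ℕ × ℕ) := (Finset.Icc 1 n ×ˢ Finset.Icc 1 n).filter
    (fun pq => pq.1 < pq.2 ∧ ((π pq.1 = i ∧ π pq.2 = i + 1) ∨ (π pq.1 = i + 1 ∧ π pq.2 = i)))
    with hE
  have hsub : invSet n (s i * π) ⊆ invSet n π ∪ E := by
    intro pq hpq
    replace hpq := Finset.mem_filter.mp hpq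
    simp only [invSet, Finset.mem_filter, Equiv.Perm.mul_apply] at hpq
    obtain ⟨hsq, hlt, hinv⟩ := hpq
    by_cases hexc : (π pq.1 = i ∧ π pq.2 = i + 1) ∨ (π pq.1 = i + 1 ∧ π pq.2 = i)
    · exact Finset.mem_union_right _ (by simp only [hE, Finset.mem_filter]; exact ⟨hsq, hlt, hexc⟩)
    · refine Finset.mem_union_left _ ?_
      simp only [invSet, Finset.mem_filter]
      refine ⟨hsq, hlt, ?_⟩
      rw [s_apply, s_apply] at hinv
      push_neg at hexc
      split_ifs at hinv <;> omega
  have hcard : E.card ≤ 1 := by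
    rw [Finset.card_le_one]
    intro a ha b hb
    simp only [hE, Finset.mem_filter] at ha hb
    obtain ⟨-, hlta, hca⟩ := ha
    obtain ⟨-, hltb, hcb⟩ := hb
    have hinj := π.injective
    rcases hca with ⟨h1, h2⟩ | ⟨h1, h2⟩ <;> rcases hcb with ⟨h3, h4⟩ | ⟨h3, h4⟩
    · have e1 : a.1 = b.1 := hinj (by rw [h1, h3])
      have e2 : a.2 = b.2 := hinj (by rw [h2, h4])
      exact Prod.ext e1 e2
    · have e1 : a.1 = b.2 := hinj (by rw [h1, h4])
      have e2 : a.2 = b.1 := hinj (by rw [h2, h3])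
      omega
    · have e1 : a.1 = b.2 := hinj (by rw [h1, h4])
      have e2 : a.2 = b.1 := hinj (by rw [h2, h3])
      omega
    · have e1 : a.1 = b.1 := hinj (by rw [h1, h3])
      have e2 : a.2 = b.2 := hinj (by rw [h2, h4])
      exact Prod.ext e1 e2
  calc (invSet n (s i * π)).card ≤ (invSet n π ∪ E).card := Finset.card_le_card hsub
    _ ≤ (invSet n π).card + E.card := Finset.card_union_le _ _
    _ ≤ (invSet n π).card + 1 := by omega

lemma invSet_card_le_mul_s (n : ℕ) (π : Equiv.Perm ℕ) (i : ℕ) :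
    (invSet n π).card ≤ (invSet n (s i * π)).card + 1 := by
  have h := invSet_mul_s_card_le n (s i * π) i
  rwa [← mul_assoc, s_mul_self, one_mul] at h

lemma inv_card_le_length (n : ℕ) : ∀ w : List ℕ, (invSet n (wperm w)).card ≤ w.length := by
  intro w
  induction w using List.reverseRecOn with
  | nil => simp [wperm_nil, invSet_one]
  | append_singleton w i ih =>
    rw [wperm_concat]
    calc (invSet n (s i * wperm w)).card ≤ (invSet n (wperm w)).card + 1 :=
          invSet_mul_s_card_le n _ i
      _ ≤ w.length + 1 := by omega
      _ = (w ++ [i]).length := by simp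
/-- prefix normal word: blocks `1..k` -/
def W (k : ℕ) (f : ℕ → ℕ) : List ℕ :=
  ((List.range k).map (fun t => sji (t + 1) (f (t + 1)))).flatten

lemma normalWord_eq_W (n : ℕ) (f : ℕ → ℕ) : normalWord n f = W n f := rfl

lemma W_succ (k : ℕ) (f : ℕ → ℕ) : W (k + 1) f = W k f ++ sji (k + 1) (f (k + 1)) := by
  simp [W, List.range_succ]

lemma W_congr {k : ℕ} {f g : ℕ → ℕ} (h : ∀ m, 1 ≤ m → m ≤ k → f m = g m) :
    W k f = W k g := by
  unfold W
  congr 1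
  apply List.map_congr_left
  intro t ht
  simp only [List.mem_range] at ht
  rw [h (t + 1) (by omega) (by omega)]

lemma mem_W {k x : ℕ} {f : ℕ → ℕ} (hf : ∀ m, 1 ≤ m → m ≤ k → 1 ≤ f m ∧ f m ≤ m)
    (hx : x ∈ W k f) : 1 ≤ x ∧ x + 1 ≤ k := by
  simp only [W, List.mem_flatten, List.mem_map] at hx
  obtain ⟨l, ⟨t, ht, rfl⟩, hxl⟩ := hx
  simp only [List.mem_range] at ht
  have h1 := mem_sji hxl
  have h2 := hf (t + 1) (by omega) (by omega)
  omega

/-- the key insertion lemma: appending a letter to a normal word, either we can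
reach a normal word in at most `k(k-1)/2` steps, or the word is not reduced -/
lemma insertion : ∀ (k : ℕ) (f : ℕ → ℕ) (i : ℕ),
    (∀ m, 1 ≤ m → m ≤ k → 1 ≤ f m ∧ f m ≤ m) → 1 ≤ i → i + 1 ≤ k →
    (∃ (f' : ℕ → ℕ) (c : ℕ), (∀ m, 1 ≤ m → m ≤ k → 1 ≤ f' m ∧ f' m ≤ m) ∧
        Reach c (W k f ++ [i]) (W k f') ∧ 2 * c ≤ k * (k - 1)) ∨
    (∃ w : List ℕ, (∀ m ∈ w, 1 ≤ m ∧ m + 1 ≤ k) ∧ wperm w = wperm (W k f ++ [i]) ∧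
        w.length + 2 = (W k f).length + 1) := by
  intro k
  induction k using Nat.strong_induction_on with
  | _ k ih =>
  intro f i hf hi1 hik
  obtain ⟨k', rfl⟩ : ∃ k', k = k' + 1 := ⟨k - 1, by omega⟩
  set j := f (k' + 1) with hj
  have hjb : 1 ≤ j ∧ j ≤ k' + 1 := hf (k' + 1) (by omega) le_rfl
  have hWs : W (k' + 1) f = W k' f ++ sji (k' + 1) j := W_succ k' f
  rcases Nat.lt_trichotomy i j with hlt | heq | hgt
  · rcases Nat.lt_or_ge (i + 1) j with hlt2 | hge2
    · -- case i + 1 < j : commute through the block, recurse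
      have hcomm : Reach (sji (k'+1) j).length (sji (k'+1) j ++ [i]) ([i] ++ sji (k'+1) j) :=
        reach_comm_through _ (fun m hm => by have := mem_sji hm; omega)
      have r1 : Reach (sji (k'+1) j).length (W (k'+1) f ++ [i])
          ((W k' f ++ [i]) ++ sji (k'+1) j) := by
        have := hcomm.append_left (W k' f)
        rw [hWs]
        simpa using this
      rcases ih k' (by omega) f i (fun m h1 h2 => hf m h1 (by omega)) hi1 (by omega) with
        ⟨f₀, c₀, hf₀, hr₀, hc₀⟩ | ⟨w₀, hw₀, hwp₀, hwl₀⟩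
      · left
        refine ⟨fun m => if m = k' + 1 then j else f₀ m, (sji (k'+1) j).length + c₀, ?_, ?_, ?_⟩
        · intro m h1 h2
          by_cases hm : m = k' + 1
          · simp only [if_pos hm]; omega
          · simp only [if_neg hm]; exact hf₀ m h1 (by omega)
        · have r2 : Reach c₀ ((W k' f ++ [i]) ++ sji (k'+1) j) (W k' f₀ ++ sji (k'+1) j) :=
            hr₀.append_right _
          have hWf' : W (k'+1) (fun m => if m = k' + 1 then j else f₀ m)
              = W k' f₀ ++ sji (k'+1) j := by
            rw [W_succ]
            simp only [if_pos rfl]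
            congr 1
            exact W_congr (fun m h1 h2 => by rw [if_neg (by omega)])
          rw [hWf']
          exact r1.trans r2
        · have harith : k' * (k' - 1) + 2 * k' = (k' + 1) * k' := by
            cases k' with
            | zero => rfl
            | succ m => simp only [Nat.add_sub_cancel]; ring
          have hlen : (sji (k'+1) j).length ≤ k' := by rw [sji_length]; omega
          calc 2 * ((sji (k'+1) j).length + c₀) = 2 * (sji (k'+1) j).length + 2 * c₀ := by ring
            _ ≤ 2 * k' + k' * (k' - 1) := by omega
            _ = (k' + 1) * k' := by omega
            _ = (k' + 1) * (k' + 1 - 1) := by simp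
      · right
        refine ⟨w₀ ++ sji (k'+1) j, ?_, ?_, ?_⟩
        · intro m hm
          rcases List.mem_append.mp hm with h | h
          · have := hw₀ m h; omega
          · have := mem_sji h; omega
        · rw [wperm_append, hwp₀, ← wperm_append, ← r1.wperm_eq]
        · have := congrArg List.length hWs
          simp only [List.length_append, sji_length] at this ⊢
          omega
    · -- case i + 1 = j : absorption, zero cost
      have hij : i = j - 1 := by omega
      left
      refine ⟨fun m => if m = k' + 1 then j - 1 else f m, 0, ?_, ?_, by omega⟩
      · intro m h1 h2
        by_cases hm : m = k' + 1
        · simp only [if_pos hm]; omega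
        · simp only [if_neg hm]; exact hf m h1 (by omega)
      · have habs : sji (k'+1) j ++ [j - 1] = sji (k'+1) (j - 1) :=
          sji_concat (by omega) (by omega)
        have hWf' : W (k'+1) (fun m => if m = k' + 1 then j - 1 else f m)
            = W k' f ++ sji (k'+1) (j - 1) := by
          rw [W_succ]
          simp only [if_pos rfl]
          congr 1
          exact W_congr (fun m h1 h2 => by rw [if_neg (by omega)])
        rw [hWf', hWs, hij, ← habs]
        simpa using Reach.refl _
  · -- case i = j : not reduced
    right
    have hjk : j ≤ k' := by omega
    have hsplit : sji (k'+1) j = sji (k'+1) (j+1) ++ [j] := by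
      have := sji_concat (show 1 ≤ j + 1 by omega) (show j + 1 ≤ k' + 1 by omega)
      simp only [Nat.add_sub_cancel] at this
      exact this.symm
    refine ⟨W k' f ++ sji (k'+1) (j+1), ?_, ?_, ?_⟩
    · intro m hm
      rcases List.mem_append.mp hm with h | h
      · have := mem_W (k := k') (f := f) (fun m h1 h2 => hf m h1 (by omega)) h; omega
      · have := mem_sji h; omega
    · rw [heq, hWs, hsplit]
      have e : (W k' f ++ (sji (k'+1) (j+1) ++ [j])) ++ [j]
          = (W k' f ++ sji (k'+1) (j+1)) ++ [j] ++ [j] := by simp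
      rw [e, wperm_concat, wperm_concat, ← mul_assoc, s_mul_self, one_mul]
    · rw [hWs]
      simp only [List.length_append, sji_length, List.length_cons]
      omega
  · -- case j < i : reflection, recurse with i - 1
    have hrefl : Reach (k' + 1 - j - 1) (sji (k'+1) j ++ [i]) ([i-1] ++ sji (k'+1) j) :=
      reach_reflect (by omega) (by omega)
    have r1 : Reach (k' + 1 - j - 1) (W (k'+1) f ++ [i]) ((W k' f ++ [i-1]) ++ sji (k'+1) j) := by
      have := hrefl.append_left (W k' f)
      rw [hWs]
      simpa using this
    rcases ih k' (by omega) f (i-1) (fun m h1 h2 => hf m h1 (by omega)) (by omega) (by omega) with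
      ⟨f₀, c₀, hf₀, hr₀, hc₀⟩ | ⟨w₀, hw₀, hwp₀, hwl₀⟩
    · left
      refine ⟨fun m => if m = k' + 1 then j else f₀ m, (k' + 1 - j - 1) + c₀, ?_, ?_, ?_⟩
      · intro m h1 h2
        by_cases hm : m = k' + 1
        · simp only [if_pos hm]; omega
        · simp only [if_neg hm]; exact hf₀ m h1 (by omega)
      · have r2 : Reach c₀ ((W k' f ++ [i-1]) ++ sji (k'+1) j) (W k' f₀ ++ sji (k'+1) j) :=
          hr₀.append_right _
        have hWf' : W (k'+1) (fun m => if m = k' + 1 then j else f₀ m)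
            = W k' f₀ ++ sji (k'+1) j := by
          rw [W_succ]
          simp only [if_pos rfl]
          congr 1
          exact W_congr (fun m h1 h2 => by rw [if_neg (by omega)])
        rw [hWf']
        exact r1.trans r2
      · calc 2 * ((k' + 1 - j - 1) + c₀) = 2 * (k' + 1 - j - 1) + 2 * c₀ := by ring
          _ ≤ 2 * k' + k' * (k' - 1) := by omega
          _ = (k' + 1) * (k' + 1 - 1) := by
            simp only [Nat.add_sub_cancel]
            cases k' with
            | zero => rfl
            | succ m => simp only [Nat.add_sub_cancel]; ring
    · right
      refine ⟨w₀ ++ sji (k'+1) j, ?_, ?_, ?_⟩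
      · intro m hm
        rcases List.mem_append.mp hm with h | h
        · have := hw₀ m h; omega
        · have := mem_sji h; omega
      · rw [wperm_append, hwp₀, ← wperm_append, ← r1.wperm_eq]
      · have := congrArg List.length hWs
        simp only [List.length_append, sji_length] at this ⊢
        omega
lemma W_id (k : ℕ) : W k (fun m => m) = [] := by
  unfold W
  rw [List.flatten_eq_nil_iff]
  intro x hx
  simp only [List.mem_map] at hx
  obtain ⟨t, _, rfl⟩ := hx
  exact sji_of_le le_rfl

lemma wperm_W_fixed {n : ℕ} {f : ℕ → ℕ} (hf : ∀ m, 1 ≤ m → m ≤ n → 1 ≤ f m ∧ f m ≤ m) :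
    wperm (W n f) (n + 1) = n + 1 :=
  wperm_fixed (fun m hm => by have := mem_W hf hm; omega)

/-- uniqueness of normal words -/
lemma W_unique : ∀ (n : ℕ) (f g : ℕ → ℕ),
    (∀ m, 1 ≤ m → m ≤ n → 1 ≤ f m ∧ f m ≤ m) →
    (∀ m, 1 ≤ m → m ≤ n → 1 ≤ g m ∧ g m ≤ m) →
    wperm (W n f) = wperm (W n g) → W n f = W n g := by
  intro n
  induction n with
  | zero => intro f g _ _ _; rfl
  | succ n ihn =>
    intro f g hf hg hw
    have hf' : ∀ m, 1 ≤ m → m ≤ n → 1 ≤ f m ∧ f m ≤ m := fun m h1 h2 => hf m h1 (by omega)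
    have hg' : ∀ m, 1 ≤ m → m ≤ n → 1 ≤ g m ∧ g m ≤ m := fun m h1 h2 => hg m h1 (by omega)
    have hval : ∀ (h : ℕ → ℕ), (∀ m, 1 ≤ m → m ≤ n + 1 → 1 ≤ h m ∧ h m ≤ m) →
        wperm (W (n+1) h) (n+1) = h (n+1) := by
      intro h hh
      rw [W_succ, wperm_append, Equiv.Perm.mul_apply,
        wperm_W_fixed (fun m h1 h2 => hh m h1 (by omega)),
        wperm_sji_apply (hh (n+1) (by omega) le_rfl).2]
    have heq : f (n + 1) = g (n + 1) := by
      rw [← hval f hf, ← hval g hg, hw]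
    have hww : wperm (W n f) = wperm (W n g) := by
      have e1 : wperm (W (n+1) f) = wperm (sji (n+1) (f (n+1))) * wperm (W n f) := by
        rw [W_succ, wperm_append]
      have e2 : wperm (W (n+1) g) = wperm (sji (n+1) (g (n+1))) * wperm (W n g) := by
        rw [W_succ, wperm_append]
      rw [e1, e2, heq] at hw
      exact mul_left_cancel hw
    rw [W_succ, W_succ, ihn f g hf' hg' hww, heq]

/-- main lemma: every reduced word reaches a normal word cheaply -/
lemma main_reach (n : ℕ) : ∀ u : List ℕ, IsExpr n u →
    u.length = (invSet n (wperm u)).card →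
    ∃ (f' : ℕ → ℕ) (c : ℕ), (∀ m, 1 ≤ m → m ≤ n → 1 ≤ f' m ∧ f' m ≤ m) ∧
      Reach c u (W n f') ∧ 2 * c ≤ n * (n - 1) * u.length := by
  intro u
  induction u using List.reverseRecOn with
  | nil =>
    intro _ _
    refine ⟨fun m => m, 0, fun m h1 h2 => ⟨h1, le_rfl⟩, ?_, by simp⟩
    rw [W_id]
    exact Reach.refl []
  | append_singleton u i ihu =>
    intro hex hlen
    have hi : 1 ≤ i ∧ i + 1 ≤ n := hex i (by simp)
    have hexu : IsExpr n u := fun m hm => hex m (by simp [hm])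
    have hlu : u.length = (invSet n (wperm u)).card := by
      have h1 := inv_card_le_length n u
      have h2 := invSet_mul_s_card_le n (wperm u) i
      rw [wperm_concat] at hlen
      simp only [List.length_append, List.length_cons, List.length_nil] at hlen
      omega
    obtain ⟨f₀, c₀, hf₀, hr₀, hc₀⟩ := ihu hexu hlu
    have r1 : Reach c₀ (u ++ [i]) (W n f₀ ++ [i]) := hr₀.append_right [i]
    rcases insertion n f₀ i hf₀ hi.1 hi.2 with
      ⟨f₁, c₁, hf₁, hr₁, hc₁⟩ | ⟨w, hw, hwp, hwl⟩
    · refine ⟨f₁, c₀ + c₁, hf₁, r1.trans hr₁, ?_⟩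
      have harith : n * (n - 1) * (u ++ [i]).length
          = n * (n - 1) * u.length + n * (n - 1) := by
        simp only [List.length_append, List.length_cons, List.length_nil]
        ring
      rw [harith]
      linarith
    · exfalso
      have hwp' : wperm w = wperm (u ++ [i]) := by rw [hwp, ← r1.wperm_eq]
      have hwl' : w.length + 2 = (u ++ [i]).length := by
        have := r1.length_eq
        simp only [List.length_append, List.length_cons, List.length_nil] at this ⊢
        omega
      have h1 := inv_card_le_length n w
      rw [hwp'] at h1
      simp only [List.length_append, List.length_cons, List.length_nil] at hlen hwl'
      omega
/-- For every reduced `n`-expression `u`, the distance to its normal form `NF(u)`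
satisfies `dist(u, NF(u)) ≤ n(n-1)·length(u)/2`. -/
theorem dist_to_normal_form (n : ℕ) (u : List ℕ) (hu : ReducedExpr n u)
    (f : ℕ → ℕ) (hf : IsNormalFun n f)
    (heq : wperm (normalWord n f) = wperm u) :
    2 * dist u (normalWord n f) ≤ n * (n - 1) * u.length := by
  obtain ⟨hex, hlen⟩ := hu
  obtain ⟨f₁, c, hf₁, hr, hc⟩ := main_reach n u hex hlen
  have hf' : ∀ m, 1 ≤ m → m ≤ n → 1 ≤ f m ∧ f m ≤ m := by
    intro m h1 h2
    exact hf m (Finset.mem_Icc.mpr ⟨h1, h2⟩)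
  have huniq : W n f = W n f₁ := by
    apply W_unique n f f₁ hf' hf₁
    rw [← normalWord_eq_W, heq, hr.wperm_eq]
  have hdist : dist u (normalWord n f) ≤ c := by
    rw [normalWord_eq_W, huniq]
    exact dist_le_of_reach hr
  omega

end
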